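/- Let V be a dependency-clique of bad events (i.e., B ~ B' for all B, B' in V). Suppose the Shearer criterion is satisfied with ε-slack, i.e., the probability vector (1+ε)P_Ω satisfies the Shearer criterion. Then for any ρ with 0 ≤ ρ < ε, the sum over B in V of Q({B}, (1+ρ)P_Ω) / Q(∅, (1+ρ)P_Ω) is at most (1+ρ)/(ε−ρ). -/

import Mathlib

open scoped BigOperators ENNReal Classical

namespace LLL

/-- Two bad events are dependent iff their variable sets intersect. -/
def Dep {n : ℕ} {E : Type} (S : E → Finset (Fin n)) (b b' : E) : Prop :=
  (S b ∩ S b').Nonempty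

/-- A witness DAG: a finite DAG with nodes labeled by bad events, where any two
nodes with dependent labels are joined by an edge (in one direction), and nodes
with non-dependent labels have no edge. -/
structure WDag (n : ℕ) (E : Type) (S : E → Finset (Fin n)) where
  size : ℕ
  label : Fin size → E
  edge : Fin size → Fin size → Prop
  acyclic : ∀ v, ¬ Relation.TransGen edge v v
  edge_dep : ∀ v w, edge v w → Dep S (label v) (label w)
  dep_edge : ∀ v w, v ≠ w → Dep S (label v) (label w) → edge v w ∨ edge w v

namespace WDag

variable {n : ℕ} {E : Type} {S : E → Finset (Fin n)}

/-- Isomorphism of witness DAGs. -/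
def Iso (G G' : WDag n E S) : Prop :=
  ∃ e : Fin G.size ≃ Fin G'.size,
    (∀ v, G'.label (e v) = G.label v) ∧ ∀ v w, G'.edge (e v) (e w) ↔ G.edge v w

theorem Iso.refl (G : WDag n E S) : Iso G G :=
  ⟨Equiv.refl _, fun _ => rfl, fun _ _ => Iff.rfl⟩

theorem Iso.symm {G G' : WDag n E S} (h : Iso G G') : Iso G' G := by
  obtain ⟨e, hl, he⟩ := h
  refine ⟨e.symm, fun v => ?_, fun v w => ?_⟩
  · simpa using (hl (e.symm v)).symm
  · simpa using (he (e.symm v) (e.symm w)).symm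

theorem Iso.trans {G₁ G₂ G₃ : WDag n E S} (h12 : Iso G₁ G₂) (h23 : Iso G₂ G₃) :
    Iso G₁ G₃ := by
  obtain ⟨e, hl, he⟩ := h12
  obtain ⟨f, hl', he'⟩ := h23
  refine ⟨e.trans f, fun v => ?_, fun v w => ?_⟩
  · rw [Equiv.trans_apply, hl' (e v), hl v]
  · rw [Equiv.trans_apply, Equiv.trans_apply, he' (e v) (e w), he v w]

instance wdSetoid (n : ℕ) (E : Type) (S : E → Finset (Fin n)) : Setoid (WDag n E S) :=
  ⟨Iso, ⟨Iso.refl, Iso.symm, Iso.trans⟩⟩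

/-- Isomorphism classes of witness DAGs. -/
def WClass (n : ℕ) (E : Type) (S : E → Finset (Fin n)) : Type :=
  Quotient (wdSetoid n E S)

/-- The weight of a witness DAG: the product of the probabilities of its labels. -/
noncomputable def wt (P : E → ℝ) (G : WDag n E S) : ℝ := ∏ v, P (G.label v)

theorem wt_invariant (P : E → ℝ) {G G' : WDag n E S} (h : Iso G G') :
    wt P G = wt P G' := by
  obtain ⟨e, hl, _⟩ := h
  exact Fintype.prod_equiv e (fun v => P (G.label v)) (fun v => P (G'.label v))
    (fun v => by simp only [hl v])

/-- The weight, as a function on isomorphism classes. -/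
noncomputable def cwt (P : E → ℝ) : WClass n E S → ℝ :=
  Quotient.lift (wt P) fun _ _ h => wt_invariant P h

theorem size_invariant {G G' : WDag n E S} (h : Iso G G') : G.size = G'.size := by
  obtain ⟨e, -, -⟩ := h
  simpa using Fintype.card_congr e

/-- The adjusted weight `a_ρ(G) = w(G) (1+ρ)^{|G|}`. -/
noncomputable def awt (P : E → ℝ) (ρ : ℝ) (G : WDag n E S) : ℝ :=
  wt P G * (1 + ρ) ^ G.size

theorem awt_invariant (P : E → ℝ) (ρ : ℝ) {G G' : WDag n E S} (h : Iso G G') :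
    awt P ρ G = awt P ρ G' := by
  unfold awt
  rw [wt_invariant P h, size_invariant h]

/-- The adjusted weight, as a function on isomorphism classes. -/
noncomputable def cawt (P : E → ℝ) (ρ : ℝ) : WClass n E S → ℝ :=
  Quotient.lift (awt P ρ) fun _ _ h => awt_invariant P ρ h

/-- A node is a sink if it has no outgoing edge. -/
def IsSink (G : WDag n E S) (v : Fin G.size) : Prop := ∀ w, ¬ G.edge v w

/-- A witness DAG has a single sink. -/
def SingleSink (G : WDag n E S) : Prop := ∃! v, IsSink G v

/-- A witness DAG has a single sink, labeled by `b`. -/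
def SinkLabeled (G : WDag n E S) (b : E) : Prop :=
  ∃ v, IsSink G v ∧ G.label v = b ∧ ∀ w, IsSink G w → w = v

end WDag

/-- A set of bad events is independent if no two distinct members are dependent. -/
def Indep {n : ℕ} {E : Type} (S : E → Finset (Fin n)) (I : Finset E) : Prop :=
  ∀ b ∈ I, ∀ b' ∈ I, b ≠ b' → ¬ Dep S b b'

/-- The independent-set polynomial `Q(I,p)`. -/
noncomputable def Q {n : ℕ} {E : Type} [Fintype E] (S : E → Finset (Fin n))
    (p : E → ℝ) (I : Finset E) : ℝ :=
  ∑ J ∈ Finset.univ.filter (fun J : Finset E => I ⊆ J ∧ Indep S J),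
    (-1 : ℝ) ^ (J.card - I.card) * ∏ b ∈ J, p b

/-- The Shearer criterion for the probability vector `p`. -/
def Shearer {n : ℕ} {E : Type} [Fintype E] (S : E → Finset (Fin n)) (p : E → ℝ) : Prop :=
  0 < Q S p ∅ ∧ ∀ I : Finset E, Indep S I → 0 ≤ Q S p I


section Aux

variable {n : ℕ} {E : Type} [Fintype E] (S : E → Finset (Fin n))

lemma dep_symm {b b' : E} (h : Dep S b b') : Dep S b' b := by
  unfold Dep at h ⊢; rwa [Finset.inter_comm]

lemma indep_subset {I J : Finset E} (hJ : Indep S J) (hIJ : I ⊆ J) : Indep S I :=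
  fun b hb b' hb' => hJ b (hIJ hb) b' (hIJ hb')

lemma Q_empty (q : E → ℝ) :
    Q S q ∅ = ∑ J ∈ Finset.univ.filter (fun J : Finset E => Indep S J),
      (-1 : ℝ) ^ J.card * ∏ b ∈ J, q b := by
  unfold Q
  apply Finset.sum_congr
  · ext J; simp
  · intro J _; simp

lemma Q_singleton_expand (q : E → ℝ) (B : E) :
    Q S q {B} = ∑ J ∈ (Finset.univ.filter (fun J : Finset E => Indep S J)).filter
        (fun J => B ∈ J),
      (-1 : ℝ) ^ (J.card - 1) * ∏ b ∈ J, q b := by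
  unfold Q
  apply Finset.sum_congr
  · ext J; simp [Finset.singleton_subset_iff, and_comm]
  · intro J _; simp

/-- Splitting off one event: `Q(∅,q) = Q(∅,q[B:=0]) - Q({B},q)`. -/
lemma Q_split (q : E → ℝ) (B : E) :
    Q S q ∅ = Q S (fun b => if b = B then 0 else q b) ∅ - Q S q {B} := by
  classical
  rw [Q_empty, Q_empty, Q_singleton_expand]
  set F0 := Finset.univ.filter (fun J : Finset E => Indep S J) with hF0
  rw [← Finset.sum_filter_add_sum_filter_not F0 (fun J => B ∈ J)
    (fun J => (-1 : ℝ) ^ J.card * ∏ b ∈ J, q b),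
      ← Finset.sum_filter_add_sum_filter_not F0 (fun J => B ∈ J)
    (fun J => (-1 : ℝ) ^ J.card * ∏ b ∈ J, (if b = B then 0 else q b))]
  have h1 : ∑ J ∈ F0.filter (fun J => B ∈ J),
      (-1 : ℝ) ^ J.card * ∏ b ∈ J, (if b = B then 0 else q b) = 0 := by
    apply Finset.sum_eq_zero
    intro J hJ
    simp only [hF0, Finset.mem_filter, Finset.mem_univ, true_and] at hJ
    have hz : (if B = B then (0:ℝ) else q B) = 0 := if_pos rfl
    rw [Finset.prod_eq_zero hJ.2 hz, mul_zero]
  have h2 : ∑ J ∈ F0.filter (fun J => ¬ B ∈ J),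
      (-1 : ℝ) ^ J.card * ∏ b ∈ J, (if b = B then 0 else q b)
      = ∑ J ∈ F0.filter (fun J => ¬ B ∈ J), (-1 : ℝ) ^ J.card * ∏ b ∈ J, q b := by
    apply Finset.sum_congr rfl
    intro J hJ
    simp only [hF0, Finset.mem_filter, Finset.mem_univ, true_and] at hJ
    congr 1
    apply Finset.prod_congr rfl
    intro b hb
    exact if_neg (fun (h : b = B) => hJ.2 (h ▸ hb))
  have h3 : ∑ J ∈ F0.filter (fun J => B ∈ J),
      (-1 : ℝ) ^ J.card * ∏ b ∈ J, q b
      = - ∑ J ∈ F0.filter (fun J => B ∈ J),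
        (-1 : ℝ) ^ (J.card - 1) * ∏ b ∈ J, q b := by
    rw [← Finset.sum_neg_distrib]
    apply Finset.sum_congr rfl
    intro J hJ
    simp only [hF0, Finset.mem_filter, Finset.mem_univ, true_and] at hJ
    have hc : J.card - 1 + 1 = J.card :=
      Nat.succ_pred_eq_of_pos (Finset.card_pos.mpr ⟨B, hJ.2⟩)
    have hpow : (-1 : ℝ) ^ J.card = (-1) ^ (J.card - 1) * (-1) := by
      rw [← pow_succ, hc]
    rw [hpow]
    ring
  rw [h1, h2, h3]
  ring

/-- Sink factorization: `Q({B},q) = q(B) · Q(∅, q·χ_{¬Dep·B})` when `B ~ B`. -/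
lemma Q_single (q : E → ℝ) (B : E) (hBB : Dep S B B) :
    Q S q {B} = q B * Q S (fun b => if Dep S b B then 0 else q b) ∅ := by
  classical
  rw [Q_empty, Q_singleton_expand]
  set F0 := Finset.univ.filter (fun J : Finset E => Indep S J) with hF0
  rw [← Finset.sum_filter_add_sum_filter_not F0 (fun J => ∀ b ∈ J, ¬ Dep S b B)
    (fun J => (-1 : ℝ) ^ J.card * ∏ b ∈ J, (if Dep S b B then 0 else q b))]
  have h1 : ∑ J ∈ F0.filter (fun J => ¬ ∀ b ∈ J, ¬ Dep S b B),
      (-1 : ℝ) ^ J.card * ∏ b ∈ J, (if Dep S b B then 0 else q b) = 0 := by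
    apply Finset.sum_eq_zero
    intro J hJ
    simp only [hF0, Finset.mem_filter, Finset.mem_univ, true_and] at hJ
    push_neg at hJ
    obtain ⟨b, hb, hdep⟩ := hJ.2
    have hz : (if Dep S b B then (0:ℝ) else q b) = 0 := if_pos hdep
    rw [Finset.prod_eq_zero hb hz, mul_zero]
  rw [h1, add_zero, Finset.mul_sum]
  refine Finset.sum_bij' (fun J _ => J.erase B) (fun J _ => insert B J)
    ?_ ?_ ?_ ?_ ?_
  · intro J hJ
    simp only [hF0, Finset.mem_filter, Finset.mem_univ, true_and] at hJ ⊢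
    obtain ⟨hJ0, hB⟩ := hJ
    refine ⟨indep_subset S hJ0 (Finset.erase_subset _ _), ?_⟩
    intro b hb
    exact hJ0 b (Finset.mem_of_mem_erase hb) B hB (Finset.ne_of_mem_erase hb)
  · intro J hJ
    simp only [hF0, Finset.mem_filter, Finset.mem_univ, true_and] at hJ ⊢
    obtain ⟨hJ0, hnd⟩ := hJ
    refine ⟨?_, Finset.mem_insert_self _ _⟩
    intro b hb b' hb' hne
    rcases Finset.mem_insert.mp hb with hc1 | hc1
    · rcases Finset.mem_insert.mp hb' with hc2 | hc2
      · exact absurd (hc1.trans hc2.symm) hne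
      · exact fun h => hnd b' hc2 (dep_symm S (hc1 ▸ h))
    · rcases Finset.mem_insert.mp hb' with hc2 | hc2
      · exact fun h => hnd b hc1 (hc2 ▸ h)
      · exact hJ0 b hc1 b' hc2 hne
  · intro J hJ
    simp only [hF0, Finset.mem_filter, Finset.mem_univ, true_and] at hJ
    exact Finset.insert_erase hJ.2
  · intro J hJ
    simp only [hF0, Finset.mem_filter, Finset.mem_univ, true_and] at hJ
    have hB : B ∉ J := fun h => hJ.2 B h hBB
    exact Finset.erase_insert hB
  · intro J hJ
    simp only [hF0, Finset.mem_filter, Finset.mem_univ, true_and] at hJ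
    obtain ⟨hJ0, hB⟩ := hJ
    have hcard := Finset.card_erase_of_mem hB
    have hprod : ∏ b ∈ J, q b = q B * ∏ b ∈ J.erase B, q b :=
      (Finset.mul_prod_erase J q hB).symm
    have hprod2 : ∏ b ∈ J.erase B, (if Dep S b B then 0 else q b)
        = ∏ b ∈ J.erase B, q b :=
      Finset.prod_congr rfl fun b hb =>
        if_neg (hJ0 b (Finset.mem_of_mem_erase hb) B hB (Finset.ne_of_mem_erase hb))
    rw [hcard, hprod2, hprod]
    ring

/-- Clique decomposition of `Q(∅,q)`. -/
lemma Q_clique (V : Finset E) (hV : ∀ b ∈ V, ∀ b' ∈ V, Dep S b b') (q : E → ℝ) :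
    Q S q ∅ = Q S (fun b => if b ∈ V then 0 else q b) ∅
      - ∑ B ∈ V, q B * Q S (fun b => if Dep S b B then 0 else q b) ∅ := by
  classical
  induction V using Finset.induction_on generalizing q with
  | empty =>
    simp only [Finset.notMem_empty, if_false, Finset.sum_empty, sub_zero]
  | @insert B₀ V' hB₀ ih =>
    have hV' : ∀ b ∈ V', ∀ b' ∈ V', Dep S b b' := fun b hb b' hb' =>
      hV b (Finset.mem_insert_of_mem hb) b' (Finset.mem_insert_of_mem hb')
    have hB₀B₀ : Dep S B₀ B₀ :=
      hV B₀ (Finset.mem_insert_self _ _) B₀ (Finset.mem_insert_self _ _)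
    have e1 : Q S q ∅ = Q S (fun b => if b = B₀ then 0 else q b) ∅ - Q S q {B₀} :=
      Q_split S q B₀
    have e2 := ih hV' (fun b => if b = B₀ then 0 else q b)
    have ha : (fun b => if b ∈ V' then 0 else if b = B₀ then 0 else q b)
        = (fun b => if b ∈ insert B₀ V' then 0 else q b) := by
      funext b
      by_cases hb1 : b = B₀
      · subst hb1
        simp
      · by_cases hb2 : b ∈ V' <;> simp [hb1, hb2, Finset.mem_insert]
    have hb : ∀ B ∈ V',
        (if B = B₀ then 0 else q B)
          * Q S (fun b => if Dep S b B then 0 else if b = B₀ then 0 else q b) ∅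
        = q B * Q S (fun b => if Dep S b B then 0 else q b) ∅ := by
      intro B hB
      have hne : B ≠ B₀ := fun h => hB₀ (h ▸ hB)
      have h2 : (fun b => if Dep S b B then 0 else if b = B₀ then 0 else q b)
          = (fun b => if Dep S b B then 0 else q b) := by
        funext b
        by_cases hd : Dep S b B
        · simp [hd]
        · have hbB0 : b ≠ B₀ := by
            rintro rfl
            exact hd (hV b (Finset.mem_insert_self _ _) B (Finset.mem_insert_of_mem hB))
          simp [hd, hbB0]
      rw [if_neg hne, h2]
    have e3 : Q S q {B₀} = q B₀ * Q S (fun b => if Dep S b B₀ then 0 else q b) ∅ :=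
      Q_single S q B₀ hB₀B₀
    rw [e1, e2, ha, e3, Finset.sum_insert hB₀, Finset.sum_congr rfl hb]
    ring

/-- Interpolation identity: if `q b = p b (1 - c b)` then
`Q(∅,q) = Σ_I c^I Q(I,p)` over independent `I`. -/
lemma Q_interp (p q c : E → ℝ) (hc : ∀ b, q b = p b * (1 - c b)) :
    Q S q ∅ = ∑ I ∈ Finset.univ.filter (fun I : Finset E => Indep S I),
      (∏ b ∈ I, c b) * Q S p I := by
  classical
  rw [Q_empty S q]
  set F0 := Finset.univ.filter (fun J : Finset E => Indep S J) with hF0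
  have key : ∀ J ∈ F0, (-1 : ℝ) ^ J.card * ∏ b ∈ J, q b
      = ∑ I ∈ F0, (if I ⊆ J then (∏ b ∈ I, c b)
          * ((-1 : ℝ) ^ (J.card - I.card) * ∏ b ∈ J, p b) else 0) := by
    intro J hJ
    have hJind : Indep S J := by
      rw [hF0, Finset.mem_filter] at hJ
      exact hJ.2
    have hps : F0.filter (fun I => I ⊆ J) = J.powerset := by
      ext t
      simp only [hF0, Finset.mem_filter, Finset.mem_univ, true_and,
        Finset.mem_powerset]
      exact ⟨fun h => h.2, fun h => ⟨indep_subset S hJind h, h⟩⟩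
    have h1 : ∏ b ∈ J, q b = (∏ b ∈ J, p b) * ∏ b ∈ J, (1 - c b) := by
      rw [← Finset.prod_mul_distrib]
      exact Finset.prod_congr rfl fun b _ => hc b
    have h3 : (-1 : ℝ) ^ J.card * ∏ b ∈ J, (1 - c b) = ∏ b ∈ J, (c b + (-1)) := by
      rw [← Finset.prod_const (-1 : ℝ), ← Finset.prod_mul_distrib]
      exact Finset.prod_congr rfl fun b _ => by ring
    have h2 : ∏ b ∈ J, (c b + (-1)) =
        ∑ t ∈ J.powerset, (∏ b ∈ t, c b) * ∏ _b ∈ J \ t, (-1 : ℝ) :=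
      Finset.prod_add _ _ _
    calc (-1 : ℝ) ^ J.card * ∏ b ∈ J, q b
        = (∏ b ∈ J, p b) * ((-1 : ℝ) ^ J.card * ∏ b ∈ J, (1 - c b)) := by
          rw [h1]; ring
      _ = (∏ b ∈ J, p b) *
            ∑ t ∈ J.powerset, (∏ b ∈ t, c b) * ∏ _b ∈ J \ t, (-1 : ℝ) := by
          rw [h3, h2]
      _ = ∑ t ∈ J.powerset, (∏ b ∈ t, c b)
            * ((-1 : ℝ) ^ (J.card - t.card) * ∏ b ∈ J, p b) := by
          rw [Finset.mul_sum]
          refine Finset.sum_congr rfl fun t ht => ?_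
          rw [Finset.prod_const, Finset.card_sdiff_of_subset (Finset.mem_powerset.mp ht)]
          ring
      _ = ∑ I ∈ F0, (if I ⊆ J then (∏ b ∈ I, c b)
            * ((-1 : ℝ) ^ (J.card - I.card) * ∏ b ∈ J, p b) else 0) := by
          rw [← hps, Finset.sum_filter]
  rw [Finset.sum_congr rfl key, Finset.sum_comm]
  refine Finset.sum_congr rfl fun I hI => ?_
  have hfilter : Finset.univ.filter (fun J : Finset E => I ⊆ J ∧ Indep S J)
      = F0.filter (fun J => I ⊆ J) := by
    ext J
    simp only [hF0, Finset.mem_filter, Finset.mem_univ, true_and]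
    exact and_comm
  unfold Q
  rw [hfilter, Finset.mul_sum]
  simp only [hF0, Finset.sum_filter]

/-- Monotonicity: if `p` satisfies Shearer and `0 ≤ q ≤ p` then `Q(∅,p) ≤ Q(∅,q)`. -/
lemma Q_mono (p q : E → ℝ) (hSh : Shearer S p) (h0 : ∀ b, 0 ≤ q b)
    (hq : ∀ b, q b ≤ p b) : Q S p ∅ ≤ Q S q ∅ := by
  classical
  set c : E → ℝ := fun b => if p b = 0 then 0 else 1 - q b / p b with hcdef
  have hc : ∀ b, q b = p b * (1 - c b) := by
    intro b
    by_cases h : p b = 0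
    · have h1 := hq b
      rw [h] at h1
      have h2 := h0 b
      simp only [hcdef, h, if_pos, zero_mul]
      linarith
    · simp only [hcdef, if_neg h]
      field_simp
      ring
  have hc0 : ∀ b, 0 ≤ c b := by
    intro b
    by_cases h : p b = 0
    · simp [hcdef, h]
    · have hpb : 0 < p b := lt_of_le_of_ne (le_trans (h0 b) (hq b)) (Ne.symm h)
      simp only [hcdef, if_neg h, sub_nonneg]
      exact (div_le_one hpb).mpr (hq b)
  rw [Q_interp S p q c hc]
  have hmem : (∅ : Finset E) ∈ Finset.univ.filter (fun I : Finset E => Indep S I) := by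
    rw [Finset.mem_filter]
    exact ⟨Finset.mem_univ _, fun b hb => absurd hb (Finset.notMem_empty b)⟩
  calc Q S p ∅ = (∏ b ∈ (∅ : Finset E), c b) * Q S p ∅ := by simp
    _ ≤ ∑ I ∈ Finset.univ.filter (fun I : Finset E => Indep S I),
          (∏ b ∈ I, c b) * Q S p I := by
        refine Finset.single_le_sum
          (f := fun I : Finset E => (∏ b ∈ I, c b) * Q S p I) (fun I hI => ?_) hmem
        rw [Finset.mem_filter] at hI
        exact mul_nonneg (Finset.prod_nonneg fun b _ => hc0 b) (hSh.2 I hI.2)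

end Aux

/-- If the Shearer criterion holds with ε-slack and V is a
dependency-clique, then for 0 ≤ ρ < ε,
Σ_{B∈V} Q({B},(1+ρ)P)/Q(∅,(1+ρ)P) ≤ (1+ρ)/(ε-ρ). -/
theorem stmt0 {n : ℕ} {E : Type} [Fintype E] (S : E → Finset (Fin n)) (P : E → ℝ)
    (hP0 : ∀ b, 0 ≤ P b) (hP1 : ∀ b, P b ≤ 1) (ε ρ : ℝ)
    (hslack : Shearer S (fun b => (1 + ε) * P b))
    (hρ0 : 0 ≤ ρ) (hρε : ρ < ε)
    (V : Finset E) (hV : ∀ b ∈ V, ∀ b' ∈ V, Dep S b b') :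
    ∑ b ∈ V, Q S (fun b' => (1 + ρ) * P b') {b} / Q S (fun b' => (1 + ρ) * P b') ∅
      ≤ (1 + ρ) / (ε - ρ) := by
  classical
  set p : E → ℝ := fun b' => (1 + ρ) * P b' with hp
  have hρ1 : (0:ℝ) < 1 + ρ := by linarith
  have hε1 : (0:ℝ) < 1 + ε := by linarith
  have hp0 : ∀ b, 0 ≤ p b := fun b => mul_nonneg (le_of_lt hρ1) (hP0 b)
  have hple : ∀ b, p b ≤ (1 + ε) * P b := fun b =>
    mul_le_mul_of_nonneg_right (by linarith) (hP0 b)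
  have hD : 0 < Q S p ∅ :=
    lt_of_lt_of_le hslack.1 (Q_mono S (fun b => (1 + ε) * P b) p hslack hp0 hple)
  have hQNpos : ∀ B, 0 < Q S (fun b => if Dep S b B then 0 else p b) ∅ := by
    intro B
    refine lt_of_lt_of_le hslack.1
      (Q_mono S (fun b => (1 + ε) * P b) _ hslack ?_ ?_)
    · intro b
      by_cases h : Dep S b B
      · simp [h]
      · simpa [h] using hp0 b
    · intro b
      by_cases h : Dep S b B
      · simp only [if_pos h]
        exact mul_nonneg (le_of_lt hε1) (hP0 b)
      · simp only [if_neg h]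
        exact hple b
  set C : ℝ := ∑ B ∈ V, P B * Q S (fun b => if Dep S b B then 0 else p b) ∅ with hC
  have hC0 : 0 ≤ C :=
    Finset.sum_nonneg fun B _ => mul_nonneg (hP0 B) (le_of_lt (hQNpos B))
  have hid1 : Q S p ∅ = Q S (fun b => if b ∈ V then 0 else p b) ∅ - (1 + ρ) * C := by
    rw [Q_clique S V hV p, hC, Finset.mul_sum]
    congr 1
    refine Finset.sum_congr rfl fun B _ => ?_
    show (1 + ρ) * P B * _ = (1 + ρ) * (P B * _)
    ring
  set qe : E → ℝ := fun b => if b ∈ V then (1 + ε) * P b else p b with hqe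
  have hqe_pos : 0 < Q S qe ∅ := by
    refine lt_of_lt_of_le hslack.1
      (Q_mono S (fun b => (1 + ε) * P b) qe hslack ?_ ?_)
    · intro b
      by_cases h : b ∈ V
      · simp only [hqe, if_pos h]
        exact mul_nonneg (le_of_lt hε1) (hP0 b)
      · simpa [hqe, h] using hp0 b
    · intro b
      by_cases h : b ∈ V
      · simp [hqe, h]
      · simpa [hqe, h] using hple b
  have hid2 : Q S qe ∅ = Q S (fun b => if b ∈ V then 0 else p b) ∅ - (1 + ε) * C := by
    rw [Q_clique S V hV qe, hC, Finset.mul_sum]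
    congr 1
    · congr 1
      funext b
      by_cases h : b ∈ V <;> simp [hqe, h]
    · refine Finset.sum_congr rfl fun B hB => ?_
      have h1 : qe B = (1 + ε) * P B := by simp [hqe, hB]
      have h2 : (fun b => if Dep S b B then 0 else qe b)
          = (fun b => if Dep S b B then 0 else p b) := by
        funext b
        by_cases hd : Dep S b B
        · simp [hd]
        · have hbV : b ∉ V := fun hbV => hd (hV b hbV B hB)
          simp [hd, hqe, hbV]
      rw [h1, h2]
      ring
  have hkey : (ε - ρ) * C ≤ Q S p ∅ := by
    have h1 : (1 + ε) * C ≤ Q S (fun b => if b ∈ V then 0 else p b) ∅ := by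
      linarith [hqe_pos, hid2]
    linarith [hid1]
  have hnum : ∀ B ∈ V, Q S p {B}
      = p B * Q S (fun b => if Dep S b B then 0 else p b) ∅ :=
    fun B hB => Q_single S p B (hV B hB B hB)
  have hsum : ∑ b ∈ V, Q S p {b} / Q S p ∅ = ((1 + ρ) * C) / Q S p ∅ := by
    rw [← Finset.sum_div]
    congr 1
    rw [Finset.sum_congr rfl hnum, hC, Finset.mul_sum]
    refine Finset.sum_congr rfl fun B _ => ?_
    show (1 + ρ) * P B * _ = (1 + ρ) * (P B * _)
    ring
  rw [hsum, div_le_div_iff₀ hD (by linarith : (0:ℝ) < ε - ρ)]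
  nlinarith [mul_le_mul_of_nonneg_left hkey (le_of_lt hρ1)]


end LLL
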